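/- Let k be a positive integer and A a nonempty finite set of integers. Write A = A₁ ∪ … ∪ A_j, where A_i = {a ∈ A : a ≡ u_i (mod k)} and u₁, …, u_j are the distinct residues in {0, …, k−1} attained by elements of A modulo k. For indices r, s set Δ_{rs} = (A_r + k·A) \ (A_r + k·A_s). Then for every subset I ⊆ {1, …, j}, Σ_{i∈I} |Δ_{ii}| ≥ |I|(|I| − 1). -/

import Mathlib

open Finset Pointwise

private lemma maxD_mem {s : Finset ℤ} (h : s.Nonempty) : s.max.unbotD 0 ∈ s := by
  obtain ⟨m, hm⟩ := s.max_of_nonempty h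
  rw [hm]; exact s.mem_of_max hm

private lemma le_maxD {s : Finset ℤ} {a : ℤ} (ha : a ∈ s) : a ≤ s.max.unbotD 0 := by
  obtain ⟨m, hm⟩ := s.max_of_nonempty ⟨a, ha⟩
  have := s.le_max ha
  rw [hm] at this ⊢
  exact_mod_cast this

private lemma minD_mem {s : Finset ℤ} (h : s.Nonempty) : s.min.untopD 0 ∈ s := by
  obtain ⟨m, hm⟩ := s.min_of_nonempty h
  rw [hm]; exact s.mem_of_min hm

private lemma minD_le {s : Finset ℤ} {a : ℤ} (ha : a ∈ s) : s.min.untopD 0 ≤ a := by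
  obtain ⟨m, hm⟩ := s.min_of_nonempty ⟨a, ha⟩
  have := s.min_le ha
  rw [hm] at this ⊢
  exact_mod_cast this

private lemma count_lemma {I : Finset ℤ} {f : ℤ → ℤ} (hf : Set.InjOn f I) :
    2 * ∑ u ∈ I, (I.filter (fun v => f u < f v)).card = I.card * (I.card - 1) := by
  have swap : ∑ u ∈ I, (I.filter (fun v => f v < f u)).card
      = ∑ u ∈ I, (I.filter (fun v => f u < f v)).card := by
    simp only [Finset.card_filter]
    rw [Finset.sum_comm]
  have key : ∀ u ∈ I, (I.filter (fun v => f u < f v)).card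
      + (I.filter (fun v => f v < f u)).card = I.card - 1 := by
    intro u hu
    rw [← Finset.card_union_of_disjoint, ← Finset.filter_or]
    · have he : I.filter (fun v => f u < f v ∨ f v < f u) = I.erase u := by
        ext v
        simp only [Finset.mem_filter, Finset.mem_erase]
        constructor
        · rintro ⟨hv, h⟩
          exact ⟨fun e => by subst e; exact lt_irrefl _ (h.elim id id), hv⟩
        · rintro ⟨hne, hv⟩
          refine ⟨hv, lt_or_gt_of_ne fun e => hne ?_⟩
          exact (hf hv hu e.symm)
      rw [he, Finset.card_erase_of_mem hu]
    · rw [Finset.disjoint_left]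
      intro v h1 h2
      rw [Finset.mem_filter] at h1 h2
      exact absurd h2.2 (not_lt.2 h1.2.le)
  calc 2 * ∑ u ∈ I, (I.filter (fun v => f u < f v)).card
      = ∑ u ∈ I, (I.filter (fun v => f u < f v)).card
        + ∑ u ∈ I, (I.filter (fun v => f v < f u)).card := by rw [swap]; ring
    _ = ∑ u ∈ I, ((I.filter (fun v => f u < f v)).card
        + (I.filter (fun v => f v < f u)).card) := (Finset.sum_add_distrib).symm
    _ = ∑ u ∈ I, (I.card - 1) := Finset.sum_congr rfl key
    _ = I.card * (I.card - 1) := by rw [Finset.sum_const, smul_eq_mul]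

theorem stmt_6 (k : ℕ) (hk : 0 < k) (A : Finset ℤ) (hA : A.Nonempty)
    (I : Finset ℤ) (hI : I ⊆ A.image (fun a => a % (k : ℤ))) :
    I.card * (I.card - 1) ≤
      ∑ u ∈ I,
        (((A.filter (fun a => a % (k : ℤ) = u)) + A.image (fun b => (k : ℤ) * b)) \
          ((A.filter (fun a => a % (k : ℤ) = u)) +
            (A.filter (fun a => a % (k : ℤ) = u)).image (fun b => (k : ℤ) * b))).card := by
  classical
  have hkz : (0:ℤ) < (k:ℤ) := by exact_mod_cast hk
  have hne : ∀ u ∈ I, (A.filter (fun a => a % (k : ℤ) = u)).Nonempty := by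
    intro u hu
    obtain ⟨a, ha, rfl⟩ := Finset.mem_image.1 (hI hu)
    exact ⟨a, Finset.mem_filter.2 ⟨ha, rfl⟩⟩
  set M : ℤ → ℤ := fun u => (A.filter (fun a => a % (k : ℤ) = u)).max.unbotD 0 with hMdef
  set m : ℤ → ℤ := fun u => (A.filter (fun a => a % (k : ℤ) = u)).min.untopD 0 with hmdef
  have hMmem : ∀ u ∈ I, M u ∈ A.filter (fun a => a % (k : ℤ) = u) :=
    fun u hu => maxD_mem (hne u hu)
  have hmmem : ∀ u ∈ I, m u ∈ A.filter (fun a => a % (k : ℤ) = u) :=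
    fun u hu => minD_mem (hne u hu)
  have hMle : ∀ u : ℤ, ∀ a ∈ A.filter (fun a => a % (k : ℤ) = u), a ≤ M u :=
    fun u a ha => le_maxD ha
  have hmle : ∀ u : ℤ, ∀ a ∈ A.filter (fun a => a % (k : ℤ) = u), m u ≤ a :=
    fun u a ha => minD_le ha
  have hMmod : ∀ u ∈ I, M u % (k:ℤ) = u := fun u hu => (Finset.mem_filter.1 (hMmem u hu)).2
  have hmmod : ∀ u ∈ I, m u % (k:ℤ) = u := fun u hu => (Finset.mem_filter.1 (hmmem u hu)).2
  have hMinj : Set.InjOn M I := fun u hu v hv h => by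
    rw [← hMmod u hu, ← hMmod v hv, h]
  have hminj : Set.InjOn m I := fun u hu v hv h => by
    rw [← hmmod u hu, ← hmmod v hv, h]
  have hnegminj : Set.InjOn (fun u => -(m u)) I := fun u hu v hv h =>
    hminj hu hv (neg_injective h)
  have hmM : ∀ u ∈ I, m u ≤ M u := fun u hu => hMle u _ (hmmem u hu)
  -- per-u bound
  have main : ∀ u ∈ I,
      (I.filter (fun v => M u < M v)).card + (I.filter (fun v => m v < m u)).card ≤
      (((A.filter (fun a => a % (k : ℤ) = u)) + A.image (fun b => (k : ℤ) * b)) \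
          ((A.filter (fun a => a % (k : ℤ) = u)) +
            (A.filter (fun a => a % (k : ℤ) = u)).image (fun b => (k : ℤ) * b))).card := by
    intro u hu
    set S1 : Finset ℤ := (I.filter (fun v => M u < M v)).image (fun v => M u + k * M v) with hS1def
    set S2 : Finset ℤ := (I.filter (fun v => m v < m u)).image (fun v => m u + k * m v) with hS2def
    have hsub : S1 ∪ S2 ⊆
        (((A.filter (fun a => a % (k : ℤ) = u)) + A.image (fun b => (k : ℤ) * b)) \
          ((A.filter (fun a => a % (k : ℤ) = u)) +
            (A.filter (fun a => a % (k : ℤ) = u)).image (fun b => (k : ℤ) * b))) := by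
      intro x hx
      rw [Finset.mem_union] at hx
      rw [Finset.mem_sdiff]
      rcases hx with hx | hx
      · obtain ⟨v, hv, rfl⟩ := Finset.mem_image.1 hx
        rw [Finset.mem_filter] at hv
        obtain ⟨hvI, hlt⟩ := hv
        constructor
        · refine Finset.mem_add.2 ⟨M u, hMmem u hu, (k:ℤ) * M v, ?_, rfl⟩
          exact Finset.mem_image.2 ⟨M v, (Finset.mem_filter.1 (hMmem v hvI)).1, rfl⟩
        · intro hbad
          obtain ⟨a, ha, c, hc, hac⟩ := Finset.mem_add.1 hbad
          obtain ⟨b, hb, rfl⟩ := Finset.mem_image.1 hc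
          have haM : a ≤ M u := hMle u a ha
          have hbM : b ≤ M u := hMle u b hb
          have : (k:ℤ) * M v ≤ (k:ℤ) * b := by linarith
          have : M v ≤ b := le_of_mul_le_mul_left this hkz
          linarith
      · obtain ⟨v, hv, rfl⟩ := Finset.mem_image.1 hx
        rw [Finset.mem_filter] at hv
        obtain ⟨hvI, hlt⟩ := hv
        constructor
        · refine Finset.mem_add.2 ⟨m u, hmmem u hu, (k:ℤ) * m v, ?_, rfl⟩
          exact Finset.mem_image.2 ⟨m v, (Finset.mem_filter.1 (hmmem v hvI)).1, rfl⟩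
        · intro hbad
          obtain ⟨a, ha, c, hc, hac⟩ := Finset.mem_add.1 hbad
          obtain ⟨b, hb, rfl⟩ := Finset.mem_image.1 hc
          have ham : m u ≤ a := hmle u a ha
          have hbm : m u ≤ b := hmle u b hb
          have : (k:ℤ) * b ≤ (k:ℤ) * m v := by linarith
          have : b ≤ m v := le_of_mul_le_mul_left this hkz
          linarith
    have hdisj : Disjoint S1 S2 := by
      rw [Finset.disjoint_left]
      intro x hx1 hx2
      obtain ⟨v, hv, rfl⟩ := Finset.mem_image.1 hx1
      obtain ⟨w, hw, hxe⟩ := Finset.mem_image.1 hx2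
      rw [Finset.mem_filter] at hv hw
      have h1 : M u + 1 ≤ M v := hv.2
      have h2 : m w + 1 ≤ m u := hw.2
      have hmu : m u ≤ M u := hmM u hu
      have hk1 : (1:ℤ) ≤ (k:ℤ) := hkz
      have hkm : (k:ℤ) * m u ≤ (k:ℤ) * M u := by
        exact mul_le_mul_of_nonneg_left hmu (le_of_lt hkz)
      have hv' : (k:ℤ) * (M u + 1) ≤ (k:ℤ) * M v :=
        mul_le_mul_of_nonneg_left h1 (le_of_lt hkz)
      have hw' : (k:ℤ) * m w ≤ (k:ℤ) * (m u - 1) :=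
        mul_le_mul_of_nonneg_left (by linarith) (le_of_lt hkz)
      nlinarith [hxe]
    have hc1 : S1.card = (I.filter (fun v => M u < M v)).card := by
      apply Finset.card_image_of_injOn
      intro a ha b hb hab
      have ha' := (Finset.mem_filter.1 (Finset.mem_coe.1 ha)).1
      have hb' := (Finset.mem_filter.1 (Finset.mem_coe.1 hb)).1
      have hab' : M u + (k:ℤ) * M a = M u + (k:ℤ) * M b := hab
      have : (k:ℤ) * M a = (k:ℤ) * M b := by linarith
      exact hMinj ha' hb' (mul_left_cancel₀ (ne_of_gt hkz) this)
    have hc2 : S2.card = (I.filter (fun v => m v < m u)).card := by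
      apply Finset.card_image_of_injOn
      intro a ha b hb hab
      have ha' := (Finset.mem_filter.1 (Finset.mem_coe.1 ha)).1
      have hb' := (Finset.mem_filter.1 (Finset.mem_coe.1 hb)).1
      have hab' : m u + (k:ℤ) * m a = m u + (k:ℤ) * m b := hab
      have : (k:ℤ) * m a = (k:ℤ) * m b := by linarith
      exact hminj ha' hb' (mul_left_cancel₀ (ne_of_gt hkz) this)
    calc (I.filter (fun v => M u < M v)).card + (I.filter (fun v => m v < m u)).card
        = S1.card + S2.card := by rw [hc1, hc2]
      _ = (S1 ∪ S2).card := (Finset.card_union_of_disjoint hdisj).symm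
      _ ≤ _ := Finset.card_le_card hsub
  -- combine
  have hsum : ∑ u ∈ I, ((I.filter (fun v => M u < M v)).card
      + (I.filter (fun v => m v < m u)).card) = I.card * (I.card - 1) := by
    rw [Finset.sum_add_distrib]
    have e2 : ∑ u ∈ I, (I.filter (fun v => m v < m u)).card
        = ∑ u ∈ I, (I.filter (fun v => (-(m u)) < (-(m v)))).card := by
      apply Finset.sum_congr rfl
      intro u _
      congr 1
      apply Finset.filter_congr
      intro v _
      simp [neg_lt_neg_iff]
    have c1 := count_lemma hMinj
    have c2 := count_lemma hnegminj
    rw [e2]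
    omega
  calc I.card * (I.card - 1)
      = ∑ u ∈ I, ((I.filter (fun v => M u < M v)).card
        + (I.filter (fun v => m v < m u)).card) := hsum.symm
    _ ≤ _ := Finset.sum_le_sum main
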